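/- Let M be an n×n primitive matrix with nonnegative integer entries, let u and t be fixed indices, and let E denote the n×n matrix unit whose (u,t) entry is 1 and all other entries are 0. Then for all integers k' > k ≥ 0, the spectral radius of (I + k'·E)·M is strictly greater than the spectral radius of (I + k·E)·M. -/

import Mathlib

open Matrix

/-- A real square matrix is primitive if it is entrywise nonnegative and some
positive power of it has all entries strictly positive. -/
def Matrix.IsPrimitiveReal {n : ℕ} (T : Matrix (Fin n) (Fin n) ℝ) : Prop :=
  (∀ i j, 0 ≤ T i j) ∧ ∃ k : ℕ, 0 < k ∧ ∀ i j, 0 < (T ^ k) i j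

/-- The spectral radius of a real square matrix: the maximum of the absolute
values of its complex eigenvalues. -/
noncomputable def specRad {n : ℕ} (A : Matrix (Fin n) (Fin n) ℝ) : ℝ :=
  sSup {x : ℝ | ∃ β : ℂ, β ∈ spectrum ℂ (A.map (Complex.ofReal)) ∧ x = ‖β‖}

section SpectralRadiusAux

open Filter Topology ENNReal
open scoped NNReal

attribute [local instance] Matrix.linftyOpNormedRing Matrix.linftyOpNormedAlgebra
  Matrix.linftyOpNormedSpace

variable {n : ℕ}

/-- The complexification of a real matrix. -/
noncomputable def cm (X : Matrix (Fin n) (Fin n) ℝ) : Matrix (Fin n) (Fin n) ℂ :=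
  X.map Complex.ofReal

local instance : CompleteSpace (Matrix (Fin n) (Fin n) ℂ) :=
  (by infer_instance : CompleteSpace (Fin n → Fin n → ℂ))

lemma cm_pow (X : Matrix (Fin n) (Fin n) ℝ) (r : ℕ) : cm (X ^ r) = (cm X) ^ r := by
  have := map_pow (Complex.ofRealHom.mapMatrix (m := Fin n)) X r
  exact this

lemma matrix_nontrivial (i₀ : Fin n) : Nontrivial (Matrix (Fin n) (Fin n) ℂ) := by
  refine ⟨1, 0, fun h => ?_⟩
  have := congrFun (congrFun h i₀) i₀
  simp [Matrix.one_apply] at this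

/-! ### Entrywise inequalities -/

lemma mul_entry_nonneg {X Y : Matrix (Fin n) (Fin n) ℝ}
    (hX : ∀ i j, 0 ≤ X i j) (hY : ∀ i j, 0 ≤ Y i j) : ∀ i j, 0 ≤ (X * Y) i j := fun i j => by
  rw [Matrix.mul_apply]
  exact Finset.sum_nonneg fun p _ => mul_nonneg (hX i p) (hY p j)

lemma pow_entry_nonneg {X : Matrix (Fin n) (Fin n) ℝ}
    (hX : ∀ i j, 0 ≤ X i j) : ∀ (r : ℕ) i j, 0 ≤ (X ^ r) i j := by
  intro r
  induction r with
  | zero => intro i j; simp only [pow_zero, Matrix.one_apply]; split <;> norm_num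
  | succ r ih => rw [pow_succ]; exact mul_entry_nonneg ih hX

lemma mul_entry_mono {X X' Y Y' : Matrix (Fin n) (Fin n) ℝ}
    (hX : ∀ i j, 0 ≤ X i j) (hY : ∀ i j, 0 ≤ Y i j)
    (h1 : ∀ i j, X i j ≤ X' i j) (h2 : ∀ i j, Y i j ≤ Y' i j) :
    ∀ i j, (X * Y) i j ≤ (X' * Y') i j := fun i j => by
  rw [Matrix.mul_apply, Matrix.mul_apply]
  exact Finset.sum_le_sum fun p _ =>
    mul_le_mul (h1 i p) (h2 p j) (hY p j) (le_trans (hX i p) (h1 i p))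

lemma pow_entry_scaled {X Y : Matrix (Fin n) (Fin n) ℝ}
    (hX : ∀ i j, 0 ≤ X i j) (a : ℝ) (ha : 0 ≤ a) (h : ∀ i j, a * X i j ≤ Y i j) :
    ∀ (r : ℕ) i j, a ^ r * (X ^ r) i j ≤ (Y ^ r) i j := by
  intro r
  induction r with
  | zero => intro i j; simp
  | succ r ih =>
    intro i j
    have hXr := pow_entry_nonneg hX r
    calc a ^ (r + 1) * (X ^ (r + 1)) i j
        = ∑ p, (a ^ r * (X ^ r) i p) * (a * X p j) := by
          rw [pow_succ X r, Matrix.mul_apply, Finset.mul_sum]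
          exact Finset.sum_congr rfl fun p _ => by ring
      _ ≤ ∑ p, (Y ^ r) i p * Y p j := Finset.sum_le_sum fun p _ =>
          mul_le_mul (ih i p) (h p j) (mul_nonneg ha (hX p j))
            (le_trans (mul_nonneg (pow_nonneg ha r) (hXr i p)) (ih i p))
      _ = (Y ^ (r + 1)) i j := by rw [pow_succ, Matrix.mul_apply]

lemma triple_ge {X Z W : Matrix (Fin n) (Fin n) ℝ}
    (hX : ∀ i j, 0 ≤ X i j) (hZ : ∀ i j, 0 ≤ Z i j) (hW : ∀ i j, 0 ≤ W i j)
    (p₀ q₀ i j : Fin n) :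
    X i p₀ * Z p₀ q₀ * W q₀ j ≤ (X * Z * W) i j := by
  have hXZ := mul_entry_nonneg hX hZ
  have h1 : X i p₀ * Z p₀ q₀ ≤ (X * Z) i q₀ := by
    rw [Matrix.mul_apply]
    exact Finset.single_le_sum (f := fun p => X i p * Z p q₀)
      (fun p _ => mul_nonneg (hX i p) (hZ p q₀)) (Finset.mem_univ p₀)
  calc X i p₀ * Z p₀ q₀ * W q₀ j ≤ (X * Z) i q₀ * W q₀ j :=
        mul_le_mul_of_nonneg_right h1 (hW q₀ j)
    _ ≤ (X * Z * W) i j := by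
        rw [Matrix.mul_apply (M := X * Z)]
        exact Finset.single_le_sum (f := fun q => (X * Z) i q * W q j)
          (fun q _ => mul_nonneg (hXZ i q) (hW q j)) (Finset.mem_univ q₀)

lemma triple_pos {X Z W : Matrix (Fin n) (Fin n) ℝ}
    (hX : ∀ i j, 0 ≤ X i j) (hZ : ∀ i j, 0 ≤ Z i j) (hW : ∀ i j, 0 ≤ W i j)
    {p₀ q₀ : Fin n} (hXpos : ∀ i j, 0 < X i j) (hWpos : ∀ i j, 0 < W i j)
    (hZpq : 0 < Z p₀ q₀) : ∀ i j, 0 < (X * Z * W) i j := fun i j =>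
  lt_of_lt_of_le (mul_pos (mul_pos (hXpos i p₀) hZpq) (hWpos q₀ j))
    (triple_ge hX hZ hW p₀ q₀ i j)

/-! ### Norm inequalities -/

lemma real_nnnorm_le {x y : ℝ} (hx : 0 ≤ x) (hxy : x ≤ y) : ‖x‖₊ ≤ ‖y‖₊ := by
  rw [← NNReal.coe_le_coe]
  simp only [coe_nnnorm, Real.norm_eq_abs, abs_of_nonneg hx, abs_of_nonneg (hx.trans hxy)]
  exact hxy

lemma nnnorm_cm_apply (X : Matrix (Fin n) (Fin n) ℝ) (i j : Fin n) :
    ‖cm X i j‖₊ = ‖X i j‖₊ := by simp [cm, Matrix.map_apply]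

lemma nnnorm_cm_le {X Y : Matrix (Fin n) (Fin n) ℝ} (a : ℝ≥0)
    (hX : ∀ i j, 0 ≤ X i j) (h : ∀ i j, (a : ℝ) * X i j ≤ Y i j) :
    a * ‖cm X‖₊ ≤ ‖cm Y‖₊ := by
  rw [Matrix.linfty_opNNNorm_def, Matrix.linfty_opNNNorm_def, NNReal.mul_finset_sup]
  refine Finset.sup_mono_fun fun i _ => ?_
  rw [Finset.mul_sum]
  refine Finset.sum_le_sum fun j _ => ?_
  rw [nnnorm_cm_apply, nnnorm_cm_apply]
  have : a * ‖X i j‖₊ = ‖(a : ℝ) * X i j‖₊ := by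
    rw [nnnorm_mul]
    congr 1
    rw [← NNReal.coe_inj]
    simp [Real.norm_eq_abs]
  rw [this]
  exact real_nnnorm_le (mul_nonneg a.coe_nonneg (hX i j)) (h i j)

lemma entry_le_nnnorm {X : Matrix (Fin n) (Fin n) ℝ} (δ : ℝ≥0) (i j : Fin n)
    (h : (δ : ℝ) ≤ X i j) : δ ≤ ‖cm X‖₊ := by
  rw [Matrix.linfty_opNNNorm_def]
  have h1 : δ ≤ ‖X i j‖₊ := by
    have := real_nnnorm_le δ.coe_nonneg h
    simpa using this
  refine le_trans h1 <| le_trans ?_ (Finset.le_sup (f := fun i => ∑ j, ‖cm X i j‖₊)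
    (Finset.mem_univ i))
  rw [← nnnorm_cm_apply]
  exact Finset.single_le_sum (f := fun j => ‖cm X i j‖₊) (fun _ _ => zero_le)
    (Finset.mem_univ j)

/-! ### Gelfand formula arguments -/

lemma gelfand_sub (X : Matrix (Fin n) (Fin n) ℝ) {m : ℕ} (hm : 0 < m) :
    Tendsto (fun r : ℕ => (‖(cm X) ^ (m * r)‖₊ : ℝ≥0∞) ^ (1 / (m * r : ℕ) : ℝ)) atTop
      (𝓝 (spectralRadius ℂ (cm X))) := by
  have h1 := spectrum.pow_nnnorm_pow_one_div_tendsto_nhds_spectralRadius (cm X)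
  have h2 : Tendsto (fun r : ℕ => m * r) atTop atTop :=
    tendsto_atTop_atTop.mpr fun b => ⟨b, fun a ha => le_trans ha (Nat.le_mul_of_pos_left a hm)⟩
  exact h1.comp h2

lemma rho_mul_le {X Y : Matrix (Fin n) (Fin n) ℝ} (hX : ∀ i j, 0 ≤ X i j)
    {m : ℕ} (hm : 0 < m) (a : ℝ≥0)
    (h : ∀ (r : ℕ) i j, ((a ^ r : ℝ≥0) : ℝ) * (X ^ (m * r)) i j ≤ (Y ^ (m * r)) i j) :
    (a : ℝ≥0∞) ^ (1 / (m : ℝ)) * spectralRadius ℂ (cm X) ≤ spectralRadius ℂ (cm Y) := by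
  have hane : (a : ℝ≥0∞) ^ (1 / (m : ℝ)) ≠ ⊤ :=
    ENNReal.rpow_ne_top_of_nonneg (by positivity) ENNReal.coe_ne_top
  refine le_of_tendsto_of_tendsto
    (ENNReal.Tendsto.const_mul (gelfand_sub X hm) (Or.inr hane)) (gelfand_sub Y hm) ?_
  filter_upwards [eventually_ge_atTop 1] with r hr
  have hmr : (0:ℝ) < (m * r : ℕ) := by
    have : 0 < m * r := Nat.mul_pos hm hr
    exact_mod_cast this
  have key : (↑(a ^ r) * ‖cm (X ^ (m * r))‖₊ : ℝ≥0∞) ≤ ‖cm (Y ^ (m * r))‖₊ := by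
    rw [← ENNReal.coe_mul]
    exact_mod_cast nnnorm_cm_le (a ^ r) (pow_entry_nonneg hX (m * r)) (h r)
  have key2 := ENNReal.rpow_le_rpow key (le_of_lt (by positivity : (0:ℝ) < 1 / (m * r : ℕ)))
  rw [ENNReal.mul_rpow_of_ne_top ENNReal.coe_ne_top ENNReal.coe_ne_top] at key2
  have e1 : ((a ^ r : ℝ≥0) : ℝ≥0∞) ^ (1 / (m * r : ℕ) : ℝ) = (a : ℝ≥0∞) ^ (1 / (m : ℝ)) := by
    rw [ENNReal.coe_pow, ← ENNReal.rpow_natCast, ← ENNReal.rpow_mul]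
    congr 1
    field_simp
    rw [mul_comm]; push_cast; rfl
  simp only [cm_pow] at key2
  calc (a : ℝ≥0∞) ^ (1 / (m : ℝ)) * (‖(cm X) ^ (m * r)‖₊ : ℝ≥0∞) ^ (1 / (m * r : ℕ) : ℝ)
      ≤ (‖(cm Y) ^ (m * r)‖₊ : ℝ≥0∞) ^ (1 / (m * r : ℕ) : ℝ) := by rw [← e1]; exact key2
    _ = _ := rfl

lemma rho_pos {X : Matrix (Fin n) (Fin n) ℝ} (hX : ∀ i j, 0 ≤ X i j)
    {s : ℕ} (hs : 0 < s) {δ : ℝ≥0} (hδ : 0 < δ) (i₀ : Fin n)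
    (h : ∀ i j, (δ : ℝ) ≤ (X ^ s) i j) : 0 < spectralRadius ℂ (cm X) := by
  have hdiag : ∀ r : ℕ, ((δ ^ r : ℝ≥0) : ℝ) ≤ (X ^ (s * r)) i₀ i₀ := by
    intro r
    induction r with
    | zero => simp [Matrix.one_apply]
    | succ r ih =>
      have : X ^ (s * (r + 1)) = X ^ (s * r) * X ^ s := by
        rw [← pow_add]; ring_nf
      rw [this, Matrix.mul_apply]
      calc ((δ ^ (r+1) : ℝ≥0) : ℝ) = ((δ ^ r : ℝ≥0):ℝ) * (δ:ℝ) := by push_cast; ring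
        _ ≤ (X ^ (s * r)) i₀ i₀ * (X ^ s) i₀ i₀ := by
            refine mul_le_mul ih (h i₀ i₀) δ.coe_nonneg ?_
            exact le_trans (by positivity) ih
        _ ≤ ∑ p, (X ^ (s * r)) i₀ p * (X ^ s) p i₀ :=
            Finset.single_le_sum (f := fun p => (X ^ (s * r)) i₀ p * (X ^ s) p i₀)
              (fun p _ => mul_nonneg (pow_entry_nonneg hX _ _ _) (pow_entry_nonneg hX _ _ _))
              (Finset.mem_univ i₀)
  have hlb : ((δ : ℝ≥0∞)) ^ (1 / (s : ℝ)) ≤ spectralRadius ℂ (cm X) := by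
    refine ge_of_tendsto (gelfand_sub X hs) ?_
    filter_upwards [eventually_ge_atTop 1] with r hr
    have h1 : (↑(δ ^ r) : ℝ≥0∞) ≤ ‖(cm X) ^ (s * r)‖₊ := by
      rw [← cm_pow]
      exact_mod_cast entry_le_nnnorm (δ ^ r) i₀ i₀ (hdiag r)
    have h2 := ENNReal.rpow_le_rpow h1 (le_of_lt (by positivity : (0:ℝ) < 1 / (s * r : ℕ)))
    refine le_trans (le_of_eq ?_) h2
    rw [ENNReal.coe_pow, ← ENNReal.rpow_natCast, ← ENNReal.rpow_mul]
    congr 1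
    have hr' : (r:ℝ) ≠ 0 := by positivity
    have hs' : (s:ℝ) ≠ 0 := by positivity
    push_cast
    field_simp
  exact lt_of_lt_of_le (ENNReal.rpow_pos (ENNReal.coe_pos.mpr hδ) ENNReal.coe_ne_top) hlb

/-! ### Relating `specRad` to `spectralRadius` -/

lemma rho_ne_top (A : Matrix (Fin n) (Fin n) ℝ) (i₀ : Fin n) :
    spectralRadius ℂ (cm A) ≠ ⊤ := by
  haveI := matrix_nontrivial i₀
  obtain ⟨z, _, hz⟩ := spectrum.exists_nnnorm_eq_spectralRadius (cm A)
  rw [← hz]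
  exact ENNReal.coe_ne_top

lemma specRad_eq (A : Matrix (Fin n) (Fin n) ℝ) (i₀ : Fin n) :
    specRad A = (spectralRadius ℂ (cm A)).toReal := by
  haveI := matrix_nontrivial i₀
  obtain ⟨z₀, hz₀, hz⟩ := spectrum.exists_nnnorm_eq_spectralRadius (cm A)
  have htr : (spectralRadius ℂ (cm A)).toReal = ‖z₀‖ := by
    rw [← hz]; simp
  have hub : ∀ x ∈ {x : ℝ | ∃ β : ℂ, β ∈ spectrum ℂ (A.map Complex.ofReal) ∧
      x = ‖β‖}, x ≤ ‖z₀‖ := by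
    rintro x ⟨β, hβ, rfl⟩
    have h1 : (‖β‖₊ : ℝ≥0∞) ≤ spectralRadius ℂ (cm A) :=
      le_iSup₂ (f := fun k (_ : k ∈ spectrum ℂ (cm A)) => (‖k‖₊ : ℝ≥0∞)) β hβ
    rw [← hz, ENNReal.coe_le_coe] at h1
    calc ‖β‖ = ‖β‖ := rfl
      _ ≤ ‖z₀‖ := h1
  have hmem : ‖z₀‖ ∈ {x : ℝ | ∃ β : ℂ, β ∈ spectrum ℂ (A.map Complex.ofReal) ∧
      x = ‖β‖} := ⟨z₀, hz₀, rfl⟩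
  rw [specRad, htr]
  exact le_antisymm (csSup_le ⟨_, hmem⟩ hub) (le_csSup ⟨‖z₀‖, hub⟩ hmem)

/-! ### The main theorem -/

lemma pow3 (X : Matrix (Fin n) (Fin n) ℝ) (s : ℕ) : X ^ s * X * X ^ s = X ^ (2 * s + 1) := by
  have : X ^ s * X * X ^ s = X ^ (s + 1 + s) := by rw [← pow_succ, ← pow_add]
  rw [this]
  congr 1
  omega

theorem spectral_radius_strict_mono_in_twist_power {n : ℕ}
    (M : Matrix (Fin n) (Fin n) ℝ) (hM : M.IsPrimitiveReal)
    (hMint : ∀ i j, ∃ m : ℕ, M i j = (m : ℝ))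
    (u t : Fin n) (k k' : ℕ) (hkk' : k < k') :
    specRad ((1 + (k : ℝ) • Matrix.single u t (1 : ℝ)) * M) <
      specRad ((1 + (k' : ℝ) • Matrix.single u t (1 : ℝ)) * M) := by
  classical
  obtain ⟨hM0, s, hs, hMs⟩ := hM
  haveI : Nonempty (Fin n) := ⟨u⟩
  set E := Matrix.single u t (1 : ℝ) with hE
  set A := (1 + (k : ℝ) • E) * M with hAdef
  set B := (1 + (k' : ℝ) • E) * M with hBdef
  have twist : ∀ (c : ℝ) i j, ((1 + c • E) * M) i j
      = M i j + c * (if i = u then M t j else 0) := by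
    intro c i j
    rw [Matrix.add_mul, Matrix.one_mul, Matrix.smul_mul, Matrix.add_apply, Matrix.smul_apply,
      smul_eq_mul]
    congr 1
    by_cases hiu : i = u
    · subst hiu
      rw [if_pos rfl, hE, Matrix.single_mul_apply_same, one_mul]
    · rw [if_neg hiu, hE, Matrix.single_mul_apply_of_ne 1 u t i j hiu M, mul_zero]
  have hind : ∀ i j, (0:ℝ) ≤ (if i = u then M t j else 0) := by
    intro i j; split
    · exact hM0 t j
    · exact le_refl 0
  have hA0 : ∀ i j, 0 ≤ A i j := fun i j => by
    rw [hAdef, twist]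
    exact add_nonneg (hM0 i j) (mul_nonneg (Nat.cast_nonneg k) (hind i j))
  have hMA : ∀ i j, M i j ≤ A i j := fun i j => by
    rw [hAdef, twist]
    exact le_add_of_nonneg_right (mul_nonneg (Nat.cast_nonneg k) (hind i j))
  have hAB : ∀ i j, A i j ≤ B i j := fun i j => by
    rw [hAdef, hBdef, twist, twist]
    have : (k:ℝ) ≤ (k':ℝ) := by exact_mod_cast hkk'.le
    nlinarith [hind i j]
  have hB0 : ∀ i j, 0 ≤ B i j := fun i j => le_trans (hA0 i j) (hAB i j)
  set d : ℝ := (k' : ℝ) - (k : ℝ) with hddef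
  have hd : 0 < d := by
    have hkr : (k:ℝ) < (k':ℝ) := by exact_mod_cast hkk'
    rw [hddef]
    linarith
  set D : Matrix (Fin n) (Fin n) ℝ :=
    Matrix.of (fun i j => d * (if i = u then M t j else 0)) with hDdef
  have hD0 : ∀ i j, 0 ≤ D i j := fun i j =>
    mul_nonneg hd.le (hind i j)
  have hBAD : B = A + D := by
    ext i j
    rw [Matrix.add_apply, hAdef, hBdef, twist, twist]
    show M i j + ↑k' * _ = M i j + ↑k * _ + D i j
    rw [hDdef]
    show _ = M i j + ↑k * _ + d * _
    rw [hddef]; ring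
  -- positivity of powers of A
  have hAspow : ∀ i j, 0 < (A ^ s) i j := by
    intro i j
    have h1 := pow_entry_scaled (X := M) (Y := A) hM0 1 zero_le_one
      (fun i j => by rw [one_mul]; exact hMA i j) s i j
    rw [one_pow, one_mul] at h1
    exact lt_of_lt_of_le (hMs i j) h1
  have hAsB : ∀ i j, (A ^ s) i j ≤ (B ^ s) i j := by
    intro i j
    have h1 := pow_entry_scaled (X := A) (Y := B) hA0 1 zero_le_one
      (fun i j => by rw [one_mul]; exact hAB i j) s i j
    rwa [one_pow, one_mul] at h1
  -- a positive entry in row t of M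
  have hrow : ∃ j₀, 0 < M t j₀ := by
    by_contra hc
    push_neg at hc
    have hz : ∀ p, M t p = 0 := fun p => le_antisymm (hc p) (hM0 t p)
    obtain ⟨s', rfl⟩ := Nat.exists_eq_succ_of_ne_zero hs.ne'
    have h0 : (M ^ (s' + 1)) t t = 0 := by
      rw [pow_succ', Matrix.mul_apply]
      exact Finset.sum_eq_zero fun p _ => by rw [hz p, zero_mul]
    exact absurd (hMs t t) (by rw [h0]; exact lt_irrefl 0)
  obtain ⟨j₀, hj₀⟩ := hrow
  set m := 2 * s + 1 with hmdef
  have hm : 0 < m := by omega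
  have hAs0 := fun i j => (hAspow i j).le
  have hAmpos : ∀ i j, 0 < (A ^ m) i j := by
    rw [hmdef, ← pow3]
    exact triple_pos hAs0 hA0 hAs0 (p₀ := t) (q₀ := j₀) hAspow hAspow
      (lt_of_lt_of_le hj₀ (hMA t j₀))
  have hPpos : ∀ i j, 0 < (A ^ s * D * A ^ s) i j := by
    refine triple_pos hAs0 hD0 hAs0 (p₀ := u) (q₀ := j₀) hAspow hAspow ?_
    show 0 < d * (if u = u then M t j₀ else 0)
    rw [if_pos rfl]
    exact mul_pos hd hj₀
  -- the gap constant
  set c : ℝ := Finset.univ.inf' Finset.univ_nonempty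
    (fun p : Fin n × Fin n => (A ^ s * D * A ^ s) p.1 p.2 / (A ^ m) p.1 p.2) with hcdef
  have hc_pos : 0 < c := by
    rw [hcdef, Finset.lt_inf'_iff]
    exact fun p _ => div_pos (hPpos p.1 p.2) (hAmpos p.1 p.2)
  have hc_le : ∀ i j, c * (A ^ m) i j ≤ (A ^ s * D * A ^ s) i j := by
    intro i j
    have h1 : c ≤ (A ^ s * D * A ^ s) i j / (A ^ m) i j := by
      rw [hcdef]
      exact Finset.inf'_le _ (Finset.mem_univ (⟨i, j⟩ : Fin n × Fin n))
    rw [le_div_iff₀ (hAmpos i j)] at h1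
    linarith [h1]
  have key1 : ∀ i j, (1 + c) * (A ^ m) i j ≤ (B ^ m) i j := by
    intro i j
    have e : A ^ s * B * A ^ s = A ^ m + A ^ s * D * A ^ s := by
      rw [hBAD, Matrix.mul_add, Matrix.add_mul, hmdef, pow3]
    have hmono : (A ^ s * B * A ^ s) i j ≤ (B ^ m) i j := by
      rw [hmdef, ← pow3 B]
      exact mul_entry_mono (mul_entry_nonneg hAs0 hB0) hAs0
        (mul_entry_mono hAs0 hB0 hAsB (fun _ _ => le_refl _)) hAsB i j
    calc (1 + c) * (A ^ m) i j = (A ^ m) i j + c * (A ^ m) i j := by ring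
      _ ≤ (A ^ m) i j + (A ^ s * D * A ^ s) i j := by linarith [hc_le i j]
      _ = (A ^ s * B * A ^ s) i j := by rw [e, Matrix.add_apply]
      _ ≤ (B ^ m) i j := hmono
  -- pass to ℝ≥0
  set a : ℝ≥0 := 1 + c.toNNReal with hadef
  have ha_real : (a : ℝ) = 1 + c := by
    rw [hadef]; push_cast
    rw [Real.coe_toNNReal _ hc_pos.le]
  have hkeyr : ∀ (r : ℕ) i j, ((a ^ r : ℝ≥0) : ℝ) * (A ^ (m * r)) i j ≤ (B ^ (m * r)) i j := by
    intro r i j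
    have h1 := pow_entry_scaled (pow_entry_nonneg hA0 m) (1 + c) (by linarith) key1 r i j
    rw [← pow_mul, ← pow_mul] at h1
    have e2 : ((a ^ r : ℝ≥0) : ℝ) = (1 + c) ^ r := by push_cast [ha_real]; ring
    rw [e2]
    exact h1
  have hρle := rho_mul_le hA0 hm a hkeyr
  -- positivity of the spectral radius of A
  set δr : ℝ := Finset.univ.inf' Finset.univ_nonempty
    (fun p : Fin n × Fin n => (A ^ s) p.1 p.2) with hδrdef
  have hδr : 0 < δr := by
    rw [hδrdef, Finset.lt_inf'_iff]
    exact fun p _ => hAspow p.1 p.2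
  have hδ : ∀ i j, ((δr.toNNReal : ℝ≥0) : ℝ) ≤ (A ^ s) i j := by
    intro i j
    rw [Real.coe_toNNReal _ hδr.le, hδrdef]
    exact Finset.inf'_le _ (Finset.mem_univ (⟨i, j⟩ : Fin n × Fin n))
  have hρA_pos : 0 < spectralRadius ℂ (cm A) :=
    rho_pos hA0 hs (Real.toNNReal_pos.mpr hδr) u hδ
  have hA_top := rho_ne_top A u
  have hB_top := rho_ne_top B u
  have ha1 : (1 : ℝ≥0∞) < (a : ℝ≥0∞) ^ (1 / (m : ℝ)) := by
    refine ENNReal.one_lt_rpow ?_ (by positivity)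
    rw [show ((1:ℝ≥0∞)) = ((1 : ℝ≥0) : ℝ≥0∞) by simp, ENNReal.coe_lt_coe, hadef]
    exact lt_add_of_pos_right 1 (Real.toNNReal_pos.mpr hc_pos)
  have hlt : spectralRadius ℂ (cm A) < spectralRadius ℂ (cm B) := by
    calc spectralRadius ℂ (cm A) = 1 * spectralRadius ℂ (cm A) := (one_mul _).symm
      _ < (a : ℝ≥0∞) ^ (1 / (m : ℝ)) * spectralRadius ℂ (cm A) :=
        ENNReal.mul_lt_mul_left hρA_pos.ne' hA_top ha1
      _ ≤ spectralRadius ℂ (cm B) := hρle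
  rw [specRad_eq A u, specRad_eq B u]
  exact (ENNReal.toReal_lt_toReal hA_top hB_top).mpr hlt

end SpectralRadiusAux
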